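/- A pair (d, m) ∈ ℤ × (Fin 6 → ℤ) is an exceptional class (d² − ∑ m_i² = −1 and 3d − ∑ m_i = 1) if and only if the multiset of values {m_1, …, m_6} together with d is one of: d = 0 with one entry −1 and five entries 0; d = 1 with two entries 1 and four entries 0; d = 2 with five entries 1 and one entry 0. The numbers of exceptional classes of these three types are respectively 6, 15 and 6, giving in total the 27 lines of the cubic surface S_6. -/

import Mathlib

/-- The multiset of values of `m : Fin 6 → ℤ`. -/
def mset6 (m : Fin 6 → ℤ) : Multiset ℤ := Finset.univ.val.map m

/-- A class `(d, m)` in `Λ₆ = ℤ × (Fin 6 → ℤ)` is exceptional if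
`d² - ∑ mᵢ² = -1` and `3d - ∑ mᵢ = 1`. -/
def IsExc6 (p : ℤ × (Fin 6 → ℤ)) : Prop :=
  p.1 ^ 2 - ∑ i, (p.2 i) ^ 2 = -1 ∧ 3 * p.1 - ∑ i, p.2 i = 1

/-- The three types `(d, multiset of mᵢ)` of exceptional classes on the cubic
surface `S₆`. -/
def excTypes6 : List (ℤ × Multiset ℤ) :=
  [ (0, (-1) ::ₘ Multiset.replicate 5 0),
    (1, Multiset.replicate 2 1 + Multiset.replicate 4 0),
    (2, Multiset.replicate 5 1 + Multiset.replicate 1 0) ]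

lemma sum_mset6 (m : Fin 6 → ℤ) : (mset6 m).sum = ∑ i, m i := rfl

lemma sq_sum_mset6 (m : Fin 6 → ℤ) :
    ((mset6 m).map (fun x => x^2)).sum = ∑ i, (m i)^2 := by
  unfold mset6; rw [Multiset.map_map]; rfl

lemma card_mset6 (m : Fin 6 → ℤ) : (mset6 m).card = 6 := by simp [mset6]

lemma all_zero (t : Multiset ℤ) (h0 : ∀ x ∈ t, 0 ≤ x) (hs : t.sum = 0) :
    ∀ x ∈ t, x = 0 := by
  induction t using Multiset.induction with
  | empty => simp
  | cons y t ih =>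
    have hts : 0 ≤ t.sum := Multiset.sum_nonneg (fun x hx => h0 x (Multiset.mem_cons_of_mem hx))
    have hy : 0 ≤ y := h0 y (by simp)
    rw [Multiset.sum_cons] at hs
    have hy0 : y = 0 := by omega
    have ht0 : t.sum = 0 := by omega
    intro x hx
    rcases Multiset.mem_cons.1 hx with rfl | hx
    · exact hy0
    · exact ih (fun x hx => h0 x (Multiset.mem_cons_of_mem hx)) ht0 x hx

lemma split2 {a b : ℤ} (hab : a ≠ b) (s : Multiset ℤ) (h : ∀ x ∈ s, x = a ∨ x = b) :
    s = Multiset.replicate (s.count a) a + Multiset.replicate (s.count b) b := by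
  induction s using Multiset.induction with
  | empty => simp
  | cons x t ih =>
    have ht := fun y hy => h y (Multiset.mem_cons_of_mem hy)
    rcases h x (by simp) with rfl | rfl
    · rw [Multiset.count_cons_self, Multiset.count_cons_of_ne (Ne.symm hab),
        Multiset.replicate_succ, Multiset.cons_add]
      conv_lhs => rw [ih ht]
    · rw [Multiset.count_cons_self, Multiset.count_cons_of_ne hab,
        Multiset.replicate_succ, Multiset.add_cons, ← Multiset.cons_add, Multiset.cons_add]
      conv_lhs => rw [ih ht]

lemma repl_of (ε : ℤ) (hε : ε ≠ 0) (s : Multiset ℤ) (h : ∀ x ∈ s, x = 0 ∨ x = ε) :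
    s = Multiset.replicate (s.count ε) ε + Multiset.replicate (s.card - s.count ε) 0 ∧
      s.sum = (s.count ε : ℤ) * ε := by
  have h' : ∀ x ∈ s, x = ε ∨ x = 0 := fun x hx => (h x hx).symm
  have hsp := split2 hε s h'
  have hcard : s.card = s.count ε + s.count 0 := by
    conv_lhs => rw [hsp]
    simp
  constructor
  · rw [show s.card - s.count ε = s.count 0 by omega]; exact hsp
  · conv_lhs => rw [hsp]
    simp [Multiset.sum_replicate, mul_comm]

lemma key (d : ℤ) (s : Multiset ℤ) (hd : d = 0 ∨ d = 1 ∨ d = 2)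
    (hcard : s.card = 6)
    (h2 : d ^ 2 - (s.map (fun x => x^2)).sum = -1)
    (h1 : 3 * d - s.sum = 1) :
    (d, s) ∈ excTypes6 := by
  have main : ∀ ε : ℤ, ε = 1 ∨ ε = -1 →
      (s.map (fun x => x^2 - ε * x)).sum = 0 →
      s = Multiset.replicate (s.count ε) ε + Multiset.replicate (6 - s.count ε) 0 ∧
        s.sum = (s.count ε : ℤ) * ε := by
    intro ε hε hsum
    have hmem : ∀ x ∈ s, x = 0 ∨ x = ε := by
      intro x hx
      have := all_zero (s.map (fun x => x^2 - ε * x))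
        (by
          intro y hy
          obtain ⟨x, hx, rfl⟩ := Multiset.mem_map.1 hy
          rcases hε with rfl | rfl <;> nlinarith [sq_nonneg (x - 1), sq_nonneg (x + 1)])
        hsum _ (Multiset.mem_map_of_mem _ hx)
      rcases hε with rfl | rfl
      · rcases mul_eq_zero.1 (by nlinarith : x * (x - 1) = 0) with h | h
        · left; exact h
        · right; omega
      · rcases mul_eq_zero.1 (by nlinarith : x * (x + 1) = 0) with h | h
        · left; exact h
        · right; omega
    have := repl_of ε (by rcases hε with rfl | rfl <;> norm_num) s hmem
    rwa [hcard] at this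
  have hsum_sub : ∀ ε : ℤ, (s.map (fun x => x^2 - ε * x)).sum
      = (s.map (fun x => x^2)).sum - ε * s.sum := by
    intro ε
    clear h1 h2 hcard main hd
    induction s using Multiset.induction with
    | empty => simp
    | cons x t ih => simp only [Multiset.map_cons, Multiset.sum_cons, ih]; ring
  rcases hd with rfl | rfl | rfl
  · obtain ⟨hrep, hs⟩ := main (-1) (Or.inr rfl) (by rw [hsum_sub]; linarith)
    have hc : (s.count (-1) : ℤ) * (-1) = -1 := by rw [← hs]; linarith
    have : s.count (-1) = 1 := by omega
    rw [this] at hrep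
    simp only [excTypes6, List.mem_cons]
    left; rw [hrep]; decide
  · obtain ⟨hrep, hs⟩ := main 1 (Or.inl rfl) (by rw [hsum_sub]; linarith)
    have hc : (s.count 1 : ℤ) * 1 = 2 := by rw [← hs]; linarith
    have : s.count 1 = 2 := by omega
    rw [this] at hrep
    simp only [excTypes6, List.mem_cons]
    right; left; rw [hrep]
  · obtain ⟨hrep, hs⟩ := main 1 (Or.inl rfl) (by rw [hsum_sub]; linarith)
    have hc : (s.count 1 : ℤ) * 1 = 5 := by rw [← hs]; linarith
    have : s.count 1 = 5 := by omega
    rw [this] at hrep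
    simp only [excTypes6, List.mem_cons]
    right; right; left; rw [hrep]

/-- The main iff. -/
lemma exc_iff (d : ℤ) (m : Fin 6 → ℤ) :
    IsExc6 (d, m) ↔ (d, mset6 m) ∈ excTypes6 := by
  constructor
  · rintro ⟨h2, h1⟩
    simp only at h2 h1
    have hCS : (∑ i, m i) ^ 2 ≤ 6 * ∑ i, (m i) ^ 2 := by
      have := sq_sum_le_card_mul_sum_sq (s := (Finset.univ : Finset (Fin 6))) (f := m)
      simpa using this
    have hd : d = 0 ∨ d = 1 ∨ d = 2 := by
      have h3 : 3 * d ^ 2 - 6 * d - 5 ≤ 0 := by nlinarith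
      have h4 : 0 ≤ d := by nlinarith
      have h5 : d ≤ 2 := by nlinarith
      omega
    exact key d (mset6 m) hd (card_mset6 m)
      (by rw [sq_sum_mset6]; linarith) (by rw [sum_mset6]; linarith)
  · intro h
    simp only [excTypes6, List.mem_cons, List.not_mem_nil, or_false, Prod.mk.injEq] at h
    constructor <;> simp only <;>
    · rcases h with ⟨rfl, hm⟩ | ⟨rfl, hm⟩ | ⟨rfl, hm⟩ <;>
      · first
        | (rw [← sq_sum_mset6, hm]; decide)
        | (rw [← sum_mset6, hm]; decide)

def typeFinset (S : Finset ℤ) (T : Multiset ℤ) : Finset (Fin 6 → ℤ) :=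
  (Fintype.piFinset fun _ : Fin 6 => S).filter (fun m => mset6 m = T)

lemma type_set_eq (d0 : ℤ) (S : Finset ℤ) (T : Multiset ℤ) (hT : ∀ x ∈ T, x ∈ S) :
    {p : ℤ × (Fin 6 → ℤ) | p.1 = d0 ∧ mset6 p.2 = T} = Prod.mk d0 '' ↑(typeFinset S T) := by
  ext ⟨d, m⟩
  simp only [Set.mem_setOf_eq, Set.mem_image, Finset.coe_filter, typeFinset,
    Set.mem_setOf_eq, Fintype.mem_piFinset, Prod.mk.injEq]
  constructor
  · rintro ⟨rfl, hm⟩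
    exact ⟨m, ⟨fun i => hT _ (hm ▸ Multiset.mem_map_of_mem m (Finset.mem_def.1 (Finset.mem_univ i))), hm⟩, rfl, rfl⟩
  · rintro ⟨m', ⟨_, hm'⟩, rfl, rfl⟩
    exact ⟨rfl, hm'⟩

lemma ncard_type (d0 : ℤ) (S : Finset ℤ) (T : Multiset ℤ) (hT : ∀ x ∈ T, x ∈ S) :
    {p : ℤ × (Fin 6 → ℤ) | p.1 = d0 ∧ mset6 p.2 = T}.ncard = (typeFinset S T).card := by
  rw [type_set_eq d0 S T hT,
    Set.ncard_image_of_injective _ (fun a b h => (Prod.mk.injEq .. ▸ h : _ ∧ _).2),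
    Set.ncard_coe_finset]

lemma type_set_finite (d0 : ℤ) (S : Finset ℤ) (T : Multiset ℤ) (hT : ∀ x ∈ T, x ∈ S) :
    {p : ℤ × (Fin 6 → ℤ) | p.1 = d0 ∧ mset6 p.2 = T}.Finite := by
  rw [type_set_eq d0 S T hT]
  exact ((typeFinset S T).finite_toSet).image _

lemma hT0 : ∀ x ∈ ((-1) ::ₘ Multiset.replicate 5 0 : Multiset ℤ), x ∈ ({-1,0} : Finset ℤ) := by decide
lemma hT1 : ∀ x ∈ (Multiset.replicate 2 1 + Multiset.replicate 4 0 : Multiset ℤ), x ∈ ({0,1} : Finset ℤ) := by decide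
lemma hT2 : ∀ x ∈ (Multiset.replicate 5 1 + Multiset.replicate 1 0 : Multiset ℤ), x ∈ ({0,1} : Finset ℤ) := by decide

lemma card0 : (typeFinset {-1,0} ((-1) ::ₘ Multiset.replicate 5 0)).card = 6 := by decide
lemma card1 : (typeFinset {0,1} (Multiset.replicate 2 1 + Multiset.replicate 4 0)).card = 15 := by decide
lemma card2 : (typeFinset {0,1} (Multiset.replicate 5 1 + Multiset.replicate 1 0)).card = 6 := by decide

/-- `(d, m) ∈ ℤ × (Fin 6 → ℤ)` is exceptional iff `d` together
with the multiset `{m₁, …, m₆}` is one of the three types listed in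
`excTypes6`; the numbers of exceptional classes of those types are
respectively `6, 15, 6`, giving in total the `27` lines of the cubic
surface `S₆`. -/
theorem exceptional_classes_S6 :
    (∀ d : ℤ, ∀ m : Fin 6 → ℤ,
      IsExc6 (d, m) ↔ (d, mset6 m) ∈ excTypes6) ∧
    (List.map
      (fun t => {p : ℤ × (Fin 6 → ℤ) | p.1 = t.1 ∧ mset6 p.2 = t.2}.ncard)
      excTypes6 = [6, 15, 6]) ∧
    {p : ℤ × (Fin 6 → ℤ) | IsExc6 p}.ncard = 27 := by
  refine ⟨exc_iff, ?_, ?_⟩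
  · simp only [excTypes6, List.map_cons, List.map_nil]
    rw [ncard_type _ _ _ hT0, ncard_type _ _ _ hT1, ncard_type _ _ _ hT2, card0, card1, card2]
  · have hset : {p : ℤ × (Fin 6 → ℤ) | IsExc6 p} =
        {p : ℤ × (Fin 6 → ℤ) | p.1 = 0 ∧ mset6 p.2 = (-1) ::ₘ Multiset.replicate 5 0} ∪
        ({p : ℤ × (Fin 6 → ℤ) | p.1 = 1 ∧ mset6 p.2 = Multiset.replicate 2 1 + Multiset.replicate 4 0} ∪
         {p : ℤ × (Fin 6 → ℤ) | p.1 = 2 ∧ mset6 p.2 = Multiset.replicate 5 1 + Multiset.replicate 1 0}) := by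
      ext ⟨d, m⟩
      rw [Set.mem_setOf_eq, exc_iff d m]
      simp only [excTypes6, List.mem_cons, List.not_mem_nil, or_false, Prod.mk.injEq,
        Set.mem_union, Set.mem_setOf_eq]
    rw [hset]
    have f0 := type_set_finite 0 _ _ hT0
    have f1 := type_set_finite 1 _ _ hT1
    have f2 := type_set_finite 2 _ _ hT2
    rw [Set.ncard_union_eq (by
        rw [Set.disjoint_left]
        rintro ⟨d, m⟩ ⟨rfl, _⟩ h
        rcases h with ⟨h, _⟩ | ⟨h, _⟩ <;> simp at h) f0 (f1.union f2),
      Set.ncard_union_eq (by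
        rw [Set.disjoint_left]
        rintro ⟨d, m⟩ ⟨rfl, _⟩ ⟨h, _⟩
        simp at h) f1 f2,
      ncard_type _ _ _ hT0, ncard_type _ _ _ hT1, ncard_type _ _ _ hT2, card0, card1, card2]
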